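/- Let $G$ be a finite abelian group, let $H$ be a subgroup of $G$, let $\widehat{G}$ denote the group of characters of $G$ with values in $\mathbb{C}^\times$, and let $\widehat{G}_H := \{\chi \in \widehat{G} \mid \chi(h) = 1 \text{ for all } h \in H\}$. Work in the group algebra $R[G]$ where $R = \mathbb{C}[x_g : g \in G]$ is the multivariate polynomial ring. Then the element $\prod_{\chi \in \widehat{G}_H} \Big( \sum_{g \in G} \chi(g)\, x_g \cdot g \Big) \in R[G]$ is supported on $H$, i.e., it equals $\sum_{h \in H} A_h \cdot h$ for polynomials $A_h \in R$, and each $A_h$ is a homogeneous polynomial of degree $|G/H| = [G:H]$. -/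

import Mathlib

open scoped Classical

/-- Over `R = ℂ[x_g : g ∈ G]`, the group-algebra element
`∏_{χ ∈ Ĝ_H} (∑_{g ∈ G} χ(g) x_g · g)` is supported on `H`, and its coefficient at each
`h ∈ H` is homogeneous of degree `[G : H] = |G/H|`. -/
theorem prod_char_sum_supported_on_subgroup {G : Type*} [CommGroup G] [Fintype G]
    (H : Subgroup G) (S : Finset (G →* ℂˣ))
    (hS : ∀ χ : G →* ℂˣ, χ ∈ S ↔ ∀ h ∈ H, χ h = 1) :
    (∀ g : G, g ∉ H →
      (∏ χ ∈ S, ∑ g' : G,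
        (MonoidAlgebra.single g' (MvPolynomial.C (χ g' : ℂ) * MvPolynomial.X g') :
          MonoidAlgebra (MvPolynomial G ℂ) G)).coeff g = 0) ∧
    (∀ h ∈ H,
      ((∏ χ ∈ S, ∑ g' : G,
        (MonoidAlgebra.single g' (MvPolynomial.C (χ g' : ℂ) * MvPolynomial.X g') :
          MonoidAlgebra (MvPolynomial G ℂ) G)).coeff h).IsHomogeneous H.index) := by
  classical
  -- Abbreviations
  set P : MonoidAlgebra (MvPolynomial G ℂ) G :=
    ∏ χ ∈ S, ∑ g' : G,
      (MonoidAlgebra.single g' (MvPolynomial.C (χ g' : ℂ) * MvPolynomial.X g') :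
        MonoidAlgebra (MvPolynomial G ℂ) G) with hP
  -- Expand the product of sums
  have hexp : P = ∑ p : (↥S → G),
      MonoidAlgebra.single (∏ χ : ↥S, p χ)
        (∏ χ : ↥S, MvPolynomial.C (((χ : G →* ℂˣ)) (p χ) : ℂ) * MvPolynomial.X (p χ)) := by
    rw [hP, ← Finset.prod_coe_sort, Finset.prod_univ_sum (fun _ => (Finset.univ : Finset G))]
    rw [Fintype.piFinset_univ]
    exact Finset.sum_congr rfl fun p _ => MonoidAlgebra.prod_single _ _ _
  -- Coefficient formula
  have hcoeff : ∀ g : G, P.coeff g = ∑ p : (↥S → G),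
      if (∏ χ : ↥S, p χ) = g then
        (∏ χ : ↥S, MvPolynomial.C (((χ : G →* ℂˣ)) (p χ) : ℂ) * MvPolynomial.X (p χ))
      else 0 := by
    intro g
    rw [hexp, MonoidAlgebra.coeff_sum, Finset.sum_apply']
    exact Finset.sum_congr rfl fun p _ => MonoidAlgebra.coeff_single_apply
  -- Cardinality of S
  haveI : NeZero ((Monoid.exponent (G ⧸ H) : ℂ)) :=
    ⟨Nat.cast_ne_zero.mpr Monoid.exponent_ne_zero_of_finite⟩
  have hcard : Fintype.card ↥S = H.index := by
    have e : ↥S ≃ ((G ⧸ H) →* ℂˣ) :=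
      { toFun := fun χ => QuotientGroup.lift H χ.1 (fun x hx => (hS χ.1).mp χ.2 x hx)
        invFun := fun φ => ⟨φ.comp (QuotientGroup.mk' H), (hS _).mpr fun h hh => by
          simp [(QuotientGroup.eq_one_iff h).mpr hh]⟩
        left_inv := fun χ => by
          ext x
          simp
          rfl
        right_inv := fun φ => by
          ext x
          simp
          rfl }
    obtain ⟨e2⟩ := CommGroup.monoidHom_mulEquiv_of_hasEnoughRootsOfUnity (G ⧸ H) ℂ
    rw [← Nat.card_eq_fintype_card, Nat.card_congr e, Nat.card_congr e2.toEquiv,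
      Subgroup.index_eq_card]
  refine ⟨?_, ?_⟩
  · -- vanishing outside H
    intro g hgH
    have hg1 : (QuotientGroup.mk g : G ⧸ H) ≠ 1 := by
      simpa [QuotientGroup.eq_one_iff] using hgH
    obtain ⟨φ, hφ⟩ := CommGroup.exists_apply_ne_one_of_hasEnoughRootsOfUnity (G ⧸ H) ℂ hg1
    set ψ : G →* ℂˣ := φ.comp (QuotientGroup.mk' H) with hψ
    have hψH : ∀ χ : G →* ℂˣ, χ ∈ S → χ * ψ ∈ S := by
      intro χ hχ
      rw [hS] at hχ ⊢
      intro h hh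
      simp [MonoidHom.mul_apply, hχ h hh, hψ, (QuotientGroup.eq_one_iff h).mpr hh]
    have hψH' : ∀ χ : G →* ℂˣ, χ ∈ S → χ * ψ⁻¹ ∈ S := by
      intro χ hχ
      rw [hS] at hχ ⊢
      intro h hh
      simp [MonoidHom.mul_apply, hχ h hh, hψ, (QuotientGroup.eq_one_iff h).mpr hh]
    set σ : ↥S ≃ ↥S :=
      { toFun := fun χ => ⟨χ.1 * ψ, hψH χ.1 χ.2⟩
        invFun := fun χ => ⟨χ.1 * ψ⁻¹, hψH' χ.1 χ.2⟩
        left_inv := fun χ => by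
          ext x
          simp [mul_assoc]
        right_inv := fun χ => by
          ext x
          simp [mul_assoc] } with hσ
    set c : ℂ := (((ψ g)⁻¹ : ℂˣ) : ℂ) with hc
    set T : (↥S → G) → MvPolynomial G ℂ := fun p =>
      if (∏ χ : ↥S, p χ) = g then
        (∏ χ : ↥S, MvPolynomial.C (((χ : G →* ℂˣ)) (p χ) : ℂ) * MvPolynomial.X (p χ))
      else 0 with hT
    have key : ∀ p : ↥S → G, T (p ∘ σ) = MvPolynomial.C c * T p := by
      intro p
      rw [hT]
      simp only [Function.comp_apply]
      rw [Equiv.prod_comp σ p]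
      by_cases hp : (∏ χ : ↥S, p χ) = g
      · rw [if_pos hp, if_pos hp]
        have h1 : (∏ χ : ↥S, MvPolynomial.C (((χ : G →* ℂˣ)) (p (σ χ)) : ℂ) *
              MvPolynomial.X (p (σ χ))) =
            ∏ χ : ↥S, MvPolynomial.C (((σ.symm χ : G →* ℂˣ)) (p χ) : ℂ) *
              MvPolynomial.X (p χ) := by
          rw [← Equiv.prod_comp σ (fun χ : ↥S =>
            MvPolynomial.C (((σ.symm χ : G →* ℂˣ)) (p χ) : ℂ) * MvPolynomial.X (p χ))]
          exact Finset.prod_congr rfl fun χ _ => by rw [Equiv.symm_apply_apply]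
        rw [h1]
        have h2 : ∀ χ : ↥S,
            MvPolynomial.C (((σ.symm χ : G →* ℂˣ)) (p χ) : ℂ) * MvPolynomial.X (p χ) =
            MvPolynomial.C ((((ψ (p χ))⁻¹ : ℂˣ)) : ℂ) *
              (MvPolynomial.C (((χ : G →* ℂˣ)) (p χ) : ℂ) * MvPolynomial.X (p χ)) := by
          intro χ
          have hv : ((σ.symm χ : G →* ℂˣ)) (p χ) = (χ : G →* ℂˣ) (p χ) * (ψ (p χ))⁻¹ := by
            simp [hσ]
          rw [hv, Units.val_mul, map_mul]
          ring
        rw [Finset.prod_congr rfl fun χ _ => h2 χ, Finset.prod_mul_distrib]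
        have h3 : (∏ χ : ↥S, ((((ψ (p χ))⁻¹ : ℂˣ)) : ℂ)) = c := by
          have e2 : (∏ χ : ↥S, (ψ (p χ))⁻¹) = (ψ g)⁻¹ := by
            rw [Finset.prod_inv_distrib, ← map_prod, hp]
          have e1 : (∏ χ : ↥S, ((((ψ (p χ))⁻¹ : ℂˣ)) : ℂ))
              = (((∏ χ : ↥S, (ψ (p χ))⁻¹ : ℂˣ)) : ℂ) := by
            simpa using (map_prod (Units.coeHom ℂ)
              (fun χ : ↥S => (ψ (p χ))⁻¹) Finset.univ).symm
          rw [e1, e2, hc]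
        have h4 : (∏ χ : ↥S, MvPolynomial.C ((((ψ (p χ))⁻¹ : ℂˣ)) : ℂ))
            = MvPolynomial.C c :=
          ((map_prod (MvPolynomial.C : ℂ →+* MvPolynomial G ℂ) _ _).symm).trans
            (congrArg _ h3)
        rw [h4]
      · rw [if_neg hp, if_neg hp, mul_zero]
    have hsum : P.coeff g = MvPolynomial.C c * P.coeff g := by
      rw [hcoeff g]
      conv_lhs => rw [← Equiv.sum_comp (Equiv.arrowCongr σ.symm (Equiv.refl G))
        (fun p : ↥S → G => if (∏ χ : ↥S, p χ) = g then
          (∏ χ : ↥S, MvPolynomial.C (((χ : G →* ℂˣ)) (p χ) : ℂ) * MvPolynomial.X (p χ))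
        else 0)]
      rw [Finset.mul_sum]
      refine Finset.sum_congr rfl fun p _ => ?_
      have : (Equiv.arrowCongr σ.symm (Equiv.refl G)) p = p ∘ σ := rfl
      rw [this]
      exact key p
    have hcne : c ≠ 1 := by
      intro hcc
      apply hφ
      have : (ψ g)⁻¹ = 1 := Units.ext (by simpa [hc] using hcc)
      rw [inv_eq_one] at this
      simpa [hψ] using this
    have h0 : (1 - MvPolynomial.C c) * P.coeff g = 0 := by
      rw [sub_mul, one_mul, ← hsum, sub_self]
    rcases mul_eq_zero.mp h0 with h | h
    · exfalso
      apply hcne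
      have h1 : (1 : MvPolynomial G ℂ) = MvPolynomial.C c := by
        rwa [sub_eq_zero] at h
      exact (MvPolynomial.C_injective G ℂ) (by rw [MvPolynomial.C_1, ← h1])
    · exact h
  · -- homogeneity
    intro h hh
    rw [hcoeff h]
    apply MvPolynomial.IsHomogeneous.sum
    intro p _
    by_cases hp : (∏ χ : ↥S, p χ) = h
    · rw [if_pos hp]
      have : (∑ _χ : ↥S, 1) = H.index := by
        simpa using hcard
      rw [← this]
      exact MvPolynomial.IsHomogeneous.prod Finset.univ _ _
        (fun χ _ => (MvPolynomial.isHomogeneous_X ℂ (p χ)).C_mul _)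
    · rw [if_neg hp]
      exact MvPolynomial.isHomogeneous_zero _ _ _
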